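/- The semigroup A = ⟨x, y | x = x², y² = 0, xy = yx⟩ generates the same variety as the monoid N₂¹; in particular, A satisfies exactly those identities u ≈ v for which C(u) = C(v) and S(u) = S(v). -/

import Mathlib

/-- Evaluation of the nonempty word `x :: w` under the substitution `φ`. -/
def evalWord {X S : Type*} [Mul S] (φ : X → S) : X → List X → S
  | x, [] => φ x
  | x, y :: l => φ x * evalWord φ y l

/-- The 4-element commutative semigroup A = ⟨x, y | x = x², y² = 0, xy = yx⟩. -/
inductive SgpA : Type | x | y | xy | zero

def SgpA.mul : SgpA → SgpA → SgpA
  | .x, .x => .x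
  | .x, .y => .xy
  | .y, .x => .xy
  | .x, .xy => .xy
  | .xy, .x => .xy
  | _, _ => .zero

instance : Semigroup SgpA where
  mul := SgpA.mul
  mul_assoc := by intro a b c; cases a <;> cases b <;> cases c <;> rfl

/-- The monoid N₂¹ = {1, a, 0} with a·a = 0 and 0 absorbing. -/
inductive N21 : Type | one | a | zero

def N21.mul : N21 → N21 → N21
  | .one, t => t
  | s, .one => s
  | _, _ => .zero

instance : Semigroup N21 where
  mul := N21.mul
  mul_assoc := by intro x y z; cases x <;> cases y <;> cases z <;> rfl

deriving instance DecidableEq for SgpA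
deriving instance DecidableEq for N21

section Aux

variable {X : Type*}

theorem evalWord_map {S T : Type*} [Mul S] [Mul T] (f : S → T)
    (hf : ∀ s t : S, f (s * t) = f s * f t) (φ : X → S) :
    ∀ (c : X) (l : List X), evalWord (fun x => f (φ x)) c l = f (evalWord φ c l)
  | _, [] => rfl
  | c, d :: l => by
    simp only [evalWord, evalWord_map f hf φ d l, hf]

/-- The value of a product in N₂¹ as a function of the number `z` of factors equal to
zero and the number `k` of factors equal to `a`. -/
def N21.res (z k : ℕ) : N21 :=
  if z ≠ 0 then .zero else if 2 ≤ k then .zero else if k = 1 then .a else .one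

theorem N21.mul_res (s : N21) (z k : ℕ) :
    s * N21.res z k = N21.res (z + if s = N21.zero then 1 else 0)
      (k + if s = N21.a then 1 else 0) := by
  cases s <;> unfold N21.res <;> simp only [reduceCtorEq, if_true, if_false, reduceIte] <;>
    split_ifs <;> first | rfl | omega

theorem evalWord_N21 (ψ : X → N21) (c : X) (l : List X) :
    evalWord ψ c l = N21.res ((c :: l).countP (fun t => ψ t = N21.zero))
      ((c :: l).countP (fun t => ψ t = N21.a)) := by
  induction l generalizing c with
  | nil =>
    cases h : ψ c <;> simp [evalWord, N21.res, List.countP_cons, h]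
  | cons d l ih =>
    have h0 : evalWord ψ c (d :: l) = ψ c * evalWord ψ d l := rfl
    rw [h0, ih, N21.mul_res]
    have hz : (c :: d :: l).countP (fun t => ψ t = N21.zero)
        = (d :: l).countP (fun t => ψ t = N21.zero) + if ψ c = N21.zero then 1 else 0 := by
      rw [List.countP_cons]; simp only [decide_eq_true_eq]
    have hk : (c :: d :: l).countP (fun t => ψ t = N21.a)
        = (d :: l).countP (fun t => ψ t = N21.a) + if ψ c = N21.a then 1 else 0 := by
      rw [List.countP_cons]; simp only [decide_eq_true_eq]
    rw [hz, hk]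

theorem N21.res_inj {k1 k2 : ℕ} (h : N21.res 0 k1 = N21.res 0 k2) :
    (k1 = 0 ↔ k2 = 0) ∧ (k1 = 1 ↔ k2 = 1) := by
  unfold N21.res at h
  split_ifs at h <;> omega

theorem countP_eq_one_iff [DecidableEq X] (p : X → Bool) (w : List X) :
    w.countP p = 1 ↔ ∃ x ∈ w, p x ∧ w.count x = 1 ∧ ∀ y ∈ w, p y → y = x := by
  rw [List.countP_eq_length_filter, List.length_eq_one_iff]
  constructor
  · rintro ⟨x, hx⟩
    have hxmem : x ∈ w.filter p := by rw [hx]; exact List.mem_singleton.2 rfl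
    rw [List.mem_filter] at hxmem
    refine ⟨x, hxmem.1, hxmem.2, ?_, ?_⟩
    · have h1 := List.count_filter (p := p) (a := x) (l := w) hxmem.2
      rw [← h1, hx]; simp
    · intro y hy hpy
      have hy2 : y ∈ w.filter p := List.mem_filter.2 ⟨hy, hpy⟩
      rw [hx] at hy2; simpa using hy2
  · rintro ⟨x, hxw, hpx, hcount, huniq⟩
    refine ⟨x, ?_⟩
    have hlen : (w.filter p).count x = (w.filter p).length := by
      rw [List.count_eq_length]
      intro b hb
      rw [List.mem_filter] at hb
      exact (huniq b hb.1 hb.2).symm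
    have hcx : (w.filter p).count x = 1 := by rw [List.count_filter hpx, hcount]
    rw [hcx] at hlen
    obtain ⟨z, hz⟩ := List.length_eq_one_iff.1 hlen.symm
    have hxz : x ∈ w.filter p := by
      rw [← List.count_pos_iff, hcx]; exact Nat.one_pos
    rw [hz] at hxz ⊢
    rw [List.mem_singleton] at hxz
    rw [hxz]

theorem countP_transfer [DecidableEq X] (p : X → Bool) (w1 w2 : List X)
    (hmem : ∀ x, x ∈ w1 ↔ x ∈ w2) (hone : ∀ x, w1.count x = 1 ↔ w2.count x = 1) :
    (w1.countP p = 0 ↔ w2.countP p = 0) ∧ (w1.countP p = 1 ↔ w2.countP p = 1) := by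
  constructor
  · rw [List.countP_eq_zero, List.countP_eq_zero]
    constructor
    · intro h x hx
      exact h x ((hmem x).2 hx)
    · intro h x hx
      exact h x ((hmem x).1 hx)
  · rw [countP_eq_one_iff, countP_eq_one_iff]
    constructor
    · rintro ⟨x, hxw, hpx, hc, hu⟩
      exact ⟨x, (hmem x).1 hxw, hpx, (hone x).1 hc,
        fun y hy hpy => hu y ((hmem y).2 hy) hpy⟩
    · rintro ⟨x, hxw, hpx, hc, hu⟩
      exact ⟨x, (hmem x).2 hxw, hpx, (hone x).2 hc,
        fun y hy hpy => hu y ((hmem y).1 hy) hpy⟩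

theorem N21_iff_comb [DecidableEq X] (a b : X) (u v : List X) :
    (∀ ψ : X → N21, evalWord ψ a u = evalWord ψ b v) ↔
      ((∀ x : X, x ∈ a :: u ↔ x ∈ b :: v) ∧
        (∀ x : X, (a :: u).count x = 1 ↔ (b :: v).count x = 1)) := by
  constructor
  · intro H
    have key : ∀ x₀ : X, ((a :: u).count x₀ = 0 ↔ (b :: v).count x₀ = 0) ∧
        ((a :: u).count x₀ = 1 ↔ (b :: v).count x₀ = 1) := by
      intro x₀
      have h := H (fun t => if t = x₀ then N21.a else N21.one)
      rw [evalWord_N21, evalWord_N21] at h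
      have hz : ∀ w : List X,
          w.countP (fun t => (if t = x₀ then N21.a else N21.one) = N21.zero) = 0 := by
        intro w
        rw [List.countP_eq_zero]
        intro t _
        split_ifs <;> simp
      have hk : ∀ w : List X,
          w.countP (fun t => (if t = x₀ then N21.a else N21.one) = N21.a) = w.count x₀ := by
        intro w
        have : w.count x₀ = w.countP (fun t => t == x₀) := rfl
        rw [this]
        apply List.countP_congr
        intro t _
        split_ifs with ht <;> simp [ht]
      rw [hz, hz, hk, hk] at h
      exact N21.res_inj h
    constructor
    · intro x
      have h1 := (key x).1
      rw [← List.count_pos_iff, ← List.count_pos_iff]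
      omega
    · intro x
      exact (key x).2
  · rintro ⟨hmem, hone⟩ ψ
    rw [evalWord_N21, evalWord_N21]
    obtain ⟨hz0, -⟩ := countP_transfer (fun t => ψ t = N21.zero) _ _ hmem hone
    obtain ⟨hk0, hk1⟩ := countP_transfer (fun t => ψ t = N21.a) _ _ hmem hone
    unfold N21.res
    split_ifs <;> first | rfl | (exfalso; omega)

/-- The surjective homomorphism A → N₂¹. -/
def SgpA.toN21 : SgpA → N21
  | .x => .one
  | .y => .a
  | .xy => .a
  | .zero => .zero

theorem SgpA.toN21_mul : ∀ s t : SgpA, (s * t).toN21 = s.toN21 * t.toN21 := by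
  intro s t; cases s <;> cases t <;> rfl

/-- A section of `SgpA.toN21`. -/
def N21.toA : N21 → SgpA
  | .one => .x
  | .a => .y
  | .zero => .zero

/-- The second coordinate of the embedding A ↪ N₂¹ × N₂¹. -/
def SgpA.toN21' : SgpA → N21
  | .x => .zero
  | .y => .a
  | .xy => .zero
  | .zero => .zero

theorem SgpA.toN21'_mul : ∀ s t : SgpA, (s * t).toN21' = s.toN21' * t.toN21' := by
  intro s t; cases s <;> cases t <;> rfl

end Aux

/-- A satisfies the same identities as N₂¹, namely exactly those identities
`a :: u ≈ b :: v` with equal contents and equal sets of simple letters. -/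
theorem SgpA_same_variety_as_N21 {X : Type*} [DecidableEq X]
    (a b : X) (u v : List X) :
    ((∀ φ : X → SgpA, evalWord φ a u = evalWord φ b v) ↔
      (∀ ψ : X → N21, evalWord ψ a u = evalWord ψ b v)) ∧
    ((∀ φ : X → SgpA, evalWord φ a u = evalWord φ b v) ↔
      ((∀ x : X, x ∈ a :: u ↔ x ∈ b :: v) ∧
        (∀ x : X, (a :: u).count x = 1 ↔ (b :: v).count x = 1))) := by
  have hiff : (∀ φ : X → SgpA, evalWord φ a u = evalWord φ b v) ↔
      (∀ ψ : X → N21, evalWord ψ a u = evalWord ψ b v) := by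
    constructor
    · intro H ψ
      have h1 := H (fun t => (ψ t).toA)
      have e : ∀ (c : X) (l : List X),
          evalWord ψ c l = (evalWord (fun t => (ψ t).toA) c l).toN21 := by
        intro c l
        rw [← evalWord_map SgpA.toN21 SgpA.toN21_mul]
        congr 1
        funext t
        cases ψ t <;> rfl
      rw [e a u, e b v, h1]
    · intro H φ
      have h1 := H (fun t => (φ t).toN21)
      have h2 := H (fun t => (φ t).toN21')
      rw [evalWord_map SgpA.toN21 SgpA.toN21_mul,
        evalWord_map SgpA.toN21 SgpA.toN21_mul] at h1
      rw [evalWord_map SgpA.toN21' SgpA.toN21'_mul,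
        evalWord_map SgpA.toN21' SgpA.toN21'_mul] at h2
      revert h1 h2
      cases evalWord φ a u <;> cases evalWord φ b v <;> intro h1 h2 <;>
        first | rfl | (exact absurd h1 (by decide)) | (exact absurd h2 (by decide))
  exact ⟨hiff, hiff.trans (N21_iff_comb a b u v)⟩
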